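/- arXiv:1712.06970 — 9 statements merged into one kernel-verified Lean document; each statement's English description precedes it below -/
import Mathlib

section
/- If C = (X, [x,y]) is a maximal clique of a simple undirected link stream with durations L, then there exist nodes u, v ∈ X and a link (b,e,u,v) ∈ E with b = x, i.e., some link between two nodes of X begins exactly at time x. -/
variable {V : Type*} [DecidableEq V]

/-- There is a link between `u` and `v` whose interval contains `[x,y]`. -/
def HasLink (E : Finset (ℝ × ℝ × V × V)) (u v : V) (x y : ℝ) : Prop :=
  ∃ b e, (b, e, u, v) ∈ E ∧ b ≤ x ∧ y ≤ e

/-- A clique `(X,[x,y])` of a link stream with durations. -/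
def IsClique (E : Finset (ℝ × ℝ × V × V)) (X : Finset V) (x y : ℝ) : Prop :=
  2 ≤ X.card ∧ x ≤ y ∧ ∀ u ∈ X, ∀ v ∈ X, u ≠ v → HasLink E u v x y

/-- A maximal clique of a link stream with durations. -/
def IsMaxClique (E : Finset (ℝ × ℝ × V × V)) (X : Finset V) (x y : ℝ) : Prop :=
  IsClique E X x y ∧ ∀ X' x' y', IsClique E X' x' y' → X ⊆ X' → x' ≤ x → y ≤ y' →
    X' = X ∧ x' = x ∧ y' = y

/-- The link stream is simple: no self-loops, well-formed intervals. -/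
def SimpleLS (E : Finset (ℝ × ℝ × V × V)) : Prop :=
  ∀ b e u v, (b, e, u, v) ∈ E → u ≠ v ∧ b ≤ e

/-- The link stream is undirected. -/
def UndirectedLS (E : Finset (ℝ × ℝ × V × V)) : Prop :=
  ∀ b e u v, (b, e, u, v) ∈ E → (b, e, v, u) ∈ E

/-- Any two distinct links between the same pair of nodes have disjoint intervals. -/
def DisjointLinks (E : Finset (ℝ × ℝ × V × V)) : Prop :=
  ∀ b e b' e' u v, (b, e, u, v) ∈ E → (b', e', u, v) ∈ E → (b, e) ≠ (b', e') →
    Disjoint (Set.Icc b e) (Set.Icc b' e')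

/-- a maximal clique has a link between two of its nodes beginning at `x`. -/
theorem maxClique_exists_link_starting_at_x {V : Type*} [DecidableEq V]
    (E : Finset (ℝ × ℝ × V × V)) (hS : SimpleLS E) (hU : UndirectedLS E)
    (hD : DisjointLinks E) (X : Finset V) (x y : ℝ) (hM : IsMaxClique E X x y) :
    ∃ u ∈ X, ∃ v ∈ X, ∃ e, (x, e, u, v) ∈ E := by
  classical
  obtain ⟨⟨hcard, hxy, hcl⟩, hmax⟩ := hM
  set S : Finset ℝ := (E.filter (fun q =>
      q.2.2.1 ∈ X ∧ q.2.2.2 ∈ X ∧ q.1 ≤ x ∧ y ≤ q.2.1)).image (fun q => q.1) with hS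
  have hne : S.Nonempty := by
    obtain ⟨u, hu, v, hv, huv⟩ := Finset.one_lt_card.mp hcard
    obtain ⟨b, e, hbe, hbx, hye⟩ := hcl u hu v hv huv
    exact ⟨b, Finset.mem_image.mpr ⟨(b, e, u, v),
      Finset.mem_filter.mpr ⟨hbe, hu, hv, hbx, hye⟩, rfl⟩⟩
  set x' := S.max' hne with hx'
  have hx'le : x' ≤ x := by
    apply Finset.max'_le
    intro b hb
    obtain ⟨q, hq, rfl⟩ := Finset.mem_image.mp hb
    exact (Finset.mem_filter.mp hq).2.2.2.1
  have hclique : IsClique E X x' y := by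
    refine ⟨hcard, le_trans hx'le hxy, fun u hu v hv huv => ?_⟩
    obtain ⟨b, e, hbe, hbx, hye⟩ := hcl u hu v hv huv
    refine ⟨b, e, hbe, ?_, hye⟩
    exact Finset.le_max' S b (Finset.mem_image.mpr ⟨(b, e, u, v),
      Finset.mem_filter.mpr ⟨hbe, hu, hv, hbx, hye⟩, rfl⟩)
  obtain ⟨-, hx'eq, -⟩ := hmax X x' y hclique (Finset.Subset.refl X) hx'le le_rfl
  have hmem := S.max'_mem hne
  rw [← hx'] at hmem
  obtain ⟨⟨b, e, u, v⟩, hq, hb⟩ := Finset.mem_image.mp hmem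
  obtain ⟨hqE, hu, hv, -, -⟩ := Finset.mem_filter.mp hq
  simp only at hb
  subst hb
  rw [hx'eq] at hqE
  exact ⟨u, hu, v, hv, e, hqE⟩
end

section
/- Symmetrically, if C = (X, [x,y]) is a maximal clique of a simple undirected link stream with durations L, then there exist nodes u, v ∈ X and a link (b,e,u,v) ∈ E with e = y. -/
variable {V : Type*} [DecidableEq V]

/-- a maximal clique has a link between two of its nodes ending at `y`. -/
theorem maxClique_exists_link_ending_at_y {V : Type*} [DecidableEq V]
    (E : Finset (ℝ × ℝ × V × V)) (hS : SimpleLS E) (hU : UndirectedLS E)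
    (hD : DisjointLinks E) (X : Finset V) (x y : ℝ) (hM : IsMaxClique E X x y) :
    ∃ u ∈ X, ∃ v ∈ X, ∃ b, (b, y, u, v) ∈ E := by
  classical
  obtain ⟨⟨hcard, hxy, hlinks⟩, hmax⟩ := hM
  -- set of relevant links
  set T : Finset (ℝ × ℝ × V × V) :=
    E.filter (fun l => l.2.2.1 ∈ X ∧ l.2.2.2 ∈ X ∧ l.1 ≤ x ∧ y ≤ l.2.1) with hT
  have hTne : T.Nonempty := by
    obtain ⟨u, hu, v, hv, huv⟩ := Finset.one_lt_card.mp hcard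
    obtain ⟨b, e, hbe, hbx, hye⟩ := hlinks u hu v hv huv
    exact ⟨(b, e, u, v), Finset.mem_filter.mpr ⟨hbe, hu, hv, hbx, hye⟩⟩
  obtain ⟨l, hlT, hlmin⟩ := T.exists_min_image (fun l => l.2.1) hTne
  obtain ⟨hlE, hlu, hlv, hlx, hly⟩ := Finset.mem_filter.mp hlT
  -- (X, [x, l.2.1]) is a clique
  have hclique : IsClique E X x l.2.1 := by
    refine ⟨hcard, le_trans hxy hly, fun u hu v hv huv => ?_⟩
    obtain ⟨b, e, hbe, hbx, hye⟩ := hlinks u hu v hv huv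
    have hmem : (b, e, u, v) ∈ T := Finset.mem_filter.mpr ⟨hbe, hu, hv, hbx, hye⟩
    exact ⟨b, e, hbe, hbx, hlmin _ hmem⟩
  have := (hmax X x l.2.1 hclique (Finset.Subset.refl X) le_rfl hly).2.2
  obtain ⟨b, e, u, v⟩ := l
  simp only at this
  subst this
  exact ⟨u, hlu, v, hlv, b, hlE⟩
end

section
/- Let C = (X, [x,y]) be a clique of a finite simple undirected link stream L, and let l = min{ e : ∃ (b,e,u,v) ∈ E with u,v ∈ X distinct and [x,y] ⊆ [b,e] }. Then (X, [x,l]) is a clique of L, and l is the largest time t ≥ y such that (X, [x,t]) is a clique. -/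
variable {V : Type*} [DecidableEq V]

/-- `(X,[x,l])` is a clique, and `l` is the largest such extension time. -/
theorem extend_time_to_min_end {V : Type*} [DecidableEq V]
    (E : Finset (ℝ × ℝ × V × V)) (hS : SimpleLS E) (hU : UndirectedLS E)
    (hD : DisjointLinks E) (X : Finset V) (x y l : ℝ) (hC : IsClique E X x y)
    (hl : IsLeast {e | ∃ b u v, u ∈ X ∧ v ∈ X ∧ u ≠ v ∧
      (b, e, u, v) ∈ E ∧ b ≤ x ∧ y ≤ e} l) :
    IsClique E X x l ∧ y ≤ l ∧ ∀ t, y ≤ t → IsClique E X x t → t ≤ l := by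
  obtain ⟨⟨b0, u0, v0, hu0, hv0, huv0, hmem0, hb0, hyl⟩, hlb⟩ := hl
  obtain ⟨hcard, hxy, hlinks⟩ := hC
  refine ⟨⟨hcard, hxy.trans hyl, ?_⟩, hyl, ?_⟩
  · intro u hu v hv huv
    obtain ⟨b, e, hmem, hb, hye⟩ := hlinks u hu v hv huv
    exact ⟨b, e, hmem, hb, hlb ⟨b, u, v, hu, hv, huv, hmem, hb, hye⟩⟩
  · intro t hyt ⟨_, _, hlinks'⟩
    obtain ⟨b', e', hmem', hb', hte'⟩ := hlinks' u0 hu0 v0 hv0 huv0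
    by_cases h : (b0, l) = (b', e')
    · exact (Prod.mk.injEq _ _ _ _ ▸ h).2 ▸ hte'
    · have hd := hD b0 l b' e' u0 v0 hmem0 hmem' h
      exact absurd (Set.disjoint_left.1 hd ⟨hb0, hxy.trans hyl⟩
        ⟨hb', (hxy.trans hyt).trans hte'⟩) not_false
end

section
/- A clique C = (X, [x,y]) of a simple undirected link stream L is maximal if and only if all three of the following hold: (1) there is no node v ∈ V \ X such that (X ∪ {v}, [x,y]) is a clique; (2) there is no time x' < x such that (X, [x',y]) is a clique; (3) there is no time y' > y such that (X, [x,y']) is a clique. -/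
variable {V : Type*} [DecidableEq V]

/-- maximality is equivalent to the three single-direction non-extensibility
conditions. -/
theorem maxClique_iff {V : Type*} [DecidableEq V]
    (E : Finset (ℝ × ℝ × V × V)) (hS : SimpleLS E) (hU : UndirectedLS E)
    (hD : DisjointLinks E) (X : Finset V) (x y : ℝ) (hC : IsClique E X x y) :
    IsMaxClique E X x y ↔
      (∀ v ∉ X, ¬ IsClique E (insert v X) x y) ∧
      (∀ x' < x, ¬ IsClique E X x' y) ∧
      (∀ y' > y, ¬ IsClique E X x y') := by
  constructor
  · rintro ⟨-, hmax⟩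
    refine ⟨?_, ?_, ?_⟩
    · intro v hv hcl
      have := hmax (insert v X) x y hcl (Finset.subset_insert v X) le_rfl le_rfl
      exact hv (this.1 ▸ Finset.mem_insert_self v X)
    · intro x' hx' hcl
      have := hmax X x' y hcl (subset_refl X) hx'.le le_rfl
      exact absurd this.2.1 hx'.ne
    · intro y' hy' hcl
      have := hmax X x y' hcl (subset_refl X) le_rfl hy'.le
      exact absurd this.2.2 hy'.ne'
  · rintro ⟨h1, h2, h3⟩
    refine ⟨hC, ?_⟩
    intro X' x' y' ⟨hcard, hxy', hlink⟩ hXX' hx' hy'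
    obtain ⟨hcard0, hxy, hlink0⟩ := hC
    -- sub-interval cliques for X
    have sub : ∀ a b : ℝ, x' ≤ a → a ≤ b → b ≤ y' → IsClique E X a b := by
      intro a b ha hab hb
      refine ⟨hcard0, hab, ?_⟩
      intro u hu v hv huv
      obtain ⟨c, d, hcd, hc, hd⟩ := hlink u (hXX' hu) v (hXX' hv) huv
      exact ⟨c, d, hcd, hc.trans ha, hb.trans hd⟩
    have hxx : x' = x := by
      by_contra hne
      exact h2 x' (lt_of_le_of_ne hx' hne) (sub x' y le_rfl (hx'.trans hxy) hy')
    have hyy : y' = y := by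
      by_contra hne
      exact h3 y' (lt_of_le_of_ne hy' (Ne.symm hne)) (sub x y' hx' (hxy.trans hy') le_rfl)
    subst hxx; subst hyy
    refine ⟨?_, rfl, rfl⟩
    by_contra hne
    obtain ⟨v, hvX', hvX⟩ := Finset.exists_of_ssubset (hXX'.ssubset_of_ne (Ne.symm hne))
    refine h1 v hvX ⟨?_, hxy, ?_⟩
    · exact hcard0.trans (Finset.card_le_card (Finset.subset_insert v X))
    · intro u hu w hw huw
      have hins : insert v X ⊆ X' := Finset.insert_subset hvX' hXX'
      exact hlink u (hins hu) w (hins hw) huw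
end

section
/- With L an instantaneous link stream and L_Δ its associated link stream with durations as defined, a pair (X, [x,y]) is a Δ-clique of L if and only if (X, [x+Δ, y]) is a clique of L_Δ. -/
variable {V : Type*} [DecidableEq V]

/-- Time window `T_Δ = [α+Δ, ω]`. -/
def TD (α ω Δ : ℝ) : Set ℝ := Set.Icc (α + Δ) ω

/-- `T_{u,v} = ⋃_{(t,u,v) ∈ E} [t, t+Δ]`. -/
def Tuv (E : Finset (ℝ × V × V)) (Δ : ℝ) (u v : V) : Set ℝ :=
  ⋃ t ∈ {t : ℝ | (t, u, v) ∈ E}, Set.Icc t (t + Δ)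

/-- `(b,e,u,v) ∈ E_Δ`: `[b,e]` is a maximal nonempty interval included in `T_Δ ∩ T_{u,v}`. -/
def EDelta (E : Finset (ℝ × V × V)) (α ω Δ : ℝ) (b e : ℝ) (u v : V) : Prop :=
  b ≤ e ∧ Set.Icc b e ⊆ TD α ω Δ ∩ Tuv E Δ u v ∧
    ∀ b' e', b' ≤ b → e ≤ e' → Set.Icc b' e' ⊆ TD α ω Δ ∩ Tuv E Δ u v → b' = b ∧ e' = e

/-- A `Δ`-clique `(X,[x,y])` of the instantaneous link stream on `T = [α,ω]`. -/
def IsDeltaClique (E : Finset (ℝ × V × V)) (α ω Δ : ℝ) (X : Finset V) (x y : ℝ) : Prop :=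
  2 ≤ X.card ∧ α ≤ x ∧ y ≤ ω ∧ x + Δ ≤ y ∧
    ∀ u ∈ X, ∀ v ∈ X, u ≠ v → ∀ s, x ≤ s → s + Δ ≤ y →
      ∃ t, s ≤ t ∧ t ≤ s + Δ ∧ (t, u, v) ∈ E

/-- A clique `(X,[x,y])` of the derived link stream with durations `L_Δ`. -/
def IsCliqueD (E : Finset (ℝ × V × V)) (α ω Δ : ℝ) (X : Finset V) (x y : ℝ) : Prop :=
  2 ≤ X.card ∧ x ≤ y ∧ ∀ u ∈ X, ∀ v ∈ X, u ≠ v →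
    ∃ b e, EDelta E α ω Δ b e u v ∧ b ≤ x ∧ y ≤ e

/-- Any closed, lower-bounded set containing a closed interval contains a maximal
closed interval around it. -/
lemma exists_maximal_interval (S : Set ℝ) (hS : IsClosed S) (lo hi p q : ℝ)
    (hpq : p ≤ q) (hsub : Set.Icc p q ⊆ S) (hbd : S ⊆ Set.Icc lo hi) :
    ∃ b e, b ≤ e ∧ Set.Icc b e ⊆ S ∧
      (∀ b' e', b' ≤ b → e ≤ e' → Set.Icc b' e' ⊆ S → b' = b ∧ e' = e) ∧
      b ≤ p ∧ q ≤ e := by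
  set A : Set ℝ := {b' | b' ≤ p ∧ Set.Icc b' q ⊆ S} with hA
  have hpA : p ∈ A := ⟨le_refl p, hsub⟩
  have hAne : A.Nonempty := ⟨p, hpA⟩
  have hAbdd : BddBelow A := by
    refine ⟨lo, fun a ha => ?_⟩
    exact (hbd (ha.2 ⟨le_refl a, ha.1.trans hpq⟩)).1
  set b := sInf A with hb
  have hbp : b ≤ p := csInf_le hAbdd hpA
  have hbq : Set.Icc b q ⊆ S := by
    intro z hz
    rcases eq_or_lt_of_le hz.1 with h | h
    · -- z = b : closure argument
      have hcl : b ∈ closure S := by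
        rw [Metric.mem_closure_iff]
        intro ε hε
        obtain ⟨a, haA, halt⟩ := exists_lt_of_csInf_lt hAne (lt_add_of_pos_right b hε)
        refine ⟨a, haA.2 ⟨le_refl a, haA.1.trans hpq⟩, ?_⟩
        have hba : b ≤ a := csInf_le hAbdd haA
        rw [Real.dist_eq, abs_of_nonpos (by linarith)]
        linarith
      rw [← h]; exact hS.closure_subset hcl
    · obtain ⟨a, haA, halt⟩ := exists_lt_of_csInf_lt hAne h
      exact haA.2 ⟨le_of_lt halt, hz.2⟩
  set B : Set ℝ := {e' | q ≤ e' ∧ Set.Icc b e' ⊆ S} with hB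
  have hqB : q ∈ B := ⟨le_refl q, hbq⟩
  have hBne : B.Nonempty := ⟨q, hqB⟩
  have hBbdd : BddAbove B := by
    refine ⟨hi, fun a ha => ?_⟩
    exact (hbd (ha.2 ⟨hbp.trans (hpq.trans ha.1), le_refl a⟩)).2
  set e := sSup B with he
  have hqe : q ≤ e := le_csSup hBbdd hqB
  have hbe : Set.Icc b e ⊆ S := by
    intro z hz
    rcases le_or_gt z q with h | h
    · exact hbq ⟨hz.1, h⟩
    · rcases eq_or_lt_of_le hz.2 with h2 | h2
      · have hcl : e ∈ closure S := by
          rw [Metric.mem_closure_iff]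
          intro ε hε
          obtain ⟨a, haB, halt⟩ := exists_lt_of_lt_csSup hBne (by linarith : e - ε < e)
          refine ⟨a, haB.2 ⟨hbp.trans (hpq.trans haB.1), le_refl a⟩, ?_⟩
          have hae : a ≤ e := le_csSup hBbdd haB
          rw [Real.dist_eq, abs_of_nonneg (by linarith)]
          linarith
        rw [h2]; exact hS.closure_subset hcl
      · obtain ⟨a, haB, halt⟩ := exists_lt_of_lt_csSup hBne h2
        exact haB.2 ⟨hz.1, le_of_lt halt⟩
  refine ⟨b, e, hbp.trans (hpq.trans hqe), hbe, ?_, hbp, hqe⟩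
  intro b' e' hb' he' hsub'
  have hb'A : b' ∈ A := ⟨hb'.trans hbp, fun z hz => hsub' ⟨hz.1, hz.2.trans (hqe.trans he')⟩⟩
  have hbb' : b' = b := le_antisymm hb' (csInf_le hAbdd hb'A)
  have he'B : e' ∈ B := ⟨hqe.trans he',
    fun z hz => hsub' ⟨hbb' ▸ hz.1, hz.2⟩⟩
  exact ⟨hbb', le_antisymm (le_csSup hBbdd he'B) he'⟩

lemma tuv_closed {V : Type*} [DecidableEq V] (E : Finset (ℝ × V × V)) (Δ : ℝ) (u v : V) :
    IsClosed (Tuv E Δ u v) := by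
  have hfin : {t : ℝ | (t, u, v) ∈ E}.Finite := by
    apply Set.Finite.subset (E.finite_toSet.image Prod.fst)
    intro t ht
    exact ⟨(t, u, v), ht, rfl⟩
  exact hfin.isClosed_biUnion (fun t _ => isClosed_Icc)

/-- `(X,[x,y])` is a `Δ`-clique of `L` iff `(X,[x+Δ,y])` is a clique of `L_Δ`. -/
theorem deltaClique_iff_clique {V : Type*} [DecidableEq V]
    (E : Finset (ℝ × V × V)) (α ω Δ : ℝ) (hΔ0 : 0 ≤ Δ) (hΔ : Δ ≤ ω - α)
    (hE : ∀ t u v, (t, u, v) ∈ E → (α ≤ t ∧ t ≤ ω) ∧ u ≠ v)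
    (hU : ∀ t u v, (t, u, v) ∈ E → (t, v, u) ∈ E)
    (X : Finset V) (x y : ℝ) :
    IsDeltaClique E α ω Δ X x y ↔ IsCliqueD E α ω Δ X (x + Δ) y := by
  constructor
  · rintro ⟨hcard, hαx, hyω, hxy, hlink⟩
    refine ⟨hcard, hxy, fun u hu v hv huv => ?_⟩
    set S : Set ℝ := TD α ω Δ ∩ Tuv E Δ u v with hSdef
    have hSclosed : IsClosed S := (isClosed_Icc).inter (tuv_closed E Δ u v)
    have hSbd : S ⊆ Set.Icc (α + Δ) ω := fun z hz => hz.1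
    have hsub : Set.Icc (x + Δ) y ⊆ S := by
      intro z hz
      constructor
      · exact ⟨by linarith [hz.1], hz.2.trans hyω⟩
      · obtain ⟨t, hst, hts, htE⟩ := hlink u hu v hv huv (z - Δ)
          (by linarith [hz.1]) (by linarith [hz.2])
        exact Set.mem_biUnion htE ⟨by linarith, by linarith⟩
    obtain ⟨b, e, hbe, hbeS, hmax, hbp, hqe⟩ :=
      exists_maximal_interval S hSclosed (α + Δ) ω (x + Δ) y hxy hsub hSbd
    exact ⟨b, e, ⟨hbe, hbeS, hmax⟩, hbp, hqe⟩
  · rintro ⟨hcard, hxy, hlink⟩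
    obtain ⟨u, hu, v, hv, huv⟩ := Finset.one_lt_card.mp (by omega : 1 < X.card)
    obtain ⟨b, e, ⟨_, hbeS, _⟩, hbx, hye⟩ := hlink u hu v hv huv
    have hx : x + Δ ∈ Set.Icc b e := ⟨hbx, hxy.trans hye⟩
    have hy : y ∈ Set.Icc b e := ⟨hbx.trans hxy, hye⟩
    have hαx : α ≤ x := by have := (hbeS hx).1.1; linarith
    have hyω : y ≤ ω := (hbeS hy).1.2
    refine ⟨hcard, hαx, hyω, hxy, fun u' hu' v' hv' huv' s hs hsy => ?_⟩
    obtain ⟨b', e', ⟨_, hbeS', _⟩, hbx', hye'⟩ := hlink u' hu' v' hv' huv'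
    have hmem : s + Δ ∈ Tuv E Δ u' v' :=
      (hbeS' ⟨by linarith, by linarith⟩).2
    obtain ⟨t, htE, hmem'⟩ := Set.mem_iUnion₂.mp hmem
    exact ⟨t, by linarith [hmem'.2], hmem'.1, htE⟩
end

section
/- The map C = (X,[x,y]) ↦ C_Δ = (X,[x+Δ,y]) is a bijection between the Δ-cliques of an instantaneous link stream L and the cliques of the associated link stream with durations L_Δ, and this bijection preserves maximality: C is a maximal Δ-clique of L if and only if C_Δ is a maximal clique of L_Δ. -/
variable {V : Type*} [DecidableEq V]

/-- A maximal `Δ`-clique. -/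
def IsMaxDeltaClique (E : Finset (ℝ × V × V)) (α ω Δ : ℝ) (X : Finset V) (x y : ℝ) : Prop :=
  IsDeltaClique E α ω Δ X x y ∧ ∀ X' x' y', IsDeltaClique E α ω Δ X' x' y' →
    X ⊆ X' → x' ≤ x → y ≤ y' → X' = X ∧ x' = x ∧ y' = y

/-- A maximal clique of `L_Δ`. -/
def IsMaxCliqueD (E : Finset (ℝ × V × V)) (α ω Δ : ℝ) (X : Finset V) (x y : ℝ) : Prop :=
  IsCliqueD E α ω Δ X x y ∧ ∀ X' x' y', IsCliqueD E α ω Δ X' x' y' →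
    X ⊆ X' → x' ≤ x → y ≤ y' → X' = X ∧ x' = x ∧ y' = y

lemma exists_max_interval {V : Type*} [DecidableEq V]
    (E : Finset (ℝ × V × V)) (α ω Δ : ℝ) (u v : V) {c d : ℝ} (hcd : c ≤ d)
    (hsub : Set.Icc c d ⊆ TD α ω Δ ∩ Tuv E Δ u v) :
    ∃ b e, EDelta E α ω Δ b e u v ∧ b ≤ c ∧ d ≤ e := by
  classical
  set S := TD α ω Δ ∩ Tuv E Δ u v with hSdef
  have hcS : c ∈ S := hsub ⟨le_refl c, hcd⟩
  have hdS : d ∈ S := hsub ⟨hcd, le_refl d⟩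
  set A : Finset ℝ := insert c (E.image (fun p => max p.1 (α + Δ))) with hA
  set A' : Finset ℝ := A.filter (fun a => Set.Icc a c ⊆ S) with hA'
  have hcA' : c ∈ A' := by
    refine Finset.mem_filter.2 ⟨Finset.mem_insert_self _ _, ?_⟩
    intro p hp
    have : p = c := le_antisymm hp.2 hp.1
    rwa [this]
  have hA'ne : A'.Nonempty := ⟨c, hcA'⟩
  set b := A'.min' hA'ne with hbdef
  have hbA' : b ∈ A' := A'.min'_mem hA'ne
  have hbc : b ≤ c := Finset.min'_le _ _ hcA'
  have hbcS : Set.Icc b c ⊆ S := (Finset.mem_filter.1 hbA').2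
  set B : Finset ℝ := insert d (E.image (fun p => min (p.1 + Δ) ω)) with hB
  set B' : Finset ℝ := B.filter (fun e => Set.Icc d e ⊆ S) with hB'
  have hdB' : d ∈ B' := by
    refine Finset.mem_filter.2 ⟨Finset.mem_insert_self _ _, ?_⟩
    intro p hp
    have : p = d := le_antisymm hp.2 hp.1
    rwa [this]
  have hB'ne : B'.Nonempty := ⟨d, hdB'⟩
  set e := B'.max' hB'ne with hedef
  have heB' : e ∈ B' := B'.max'_mem hB'ne
  have hde : d ≤ e := Finset.le_max' _ _ hdB'
  have hdeS : Set.Icc d e ⊆ S := (Finset.mem_filter.1 heB').2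
  have hbeS : Set.Icc b e ⊆ S := by
    intro p hp
    rcases le_total p c with h | h
    · exact hbcS ⟨hp.1, h⟩
    · rcases le_total p d with h2 | h2
      · exact hsub ⟨h, h2⟩
      · exact hdeS ⟨h2, hp.2⟩
  refine ⟨b, e, ⟨by linarith, hbeS, ?_⟩, hbc, hde⟩
  intro b' e' hb' he' hsub'
  have hb'e' : b' ≤ e' := by linarith
  constructor
  · by_contra hne
    have hlt : b' < b := lt_of_le_of_ne hb' hne
    have hb'S : b' ∈ S := hsub' ⟨le_refl b', hb'e'⟩
    obtain ⟨hb'TD, hb'Tuv⟩ := hb'S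
    simp only [Tuv, Set.mem_iUnion, Set.mem_setOf_eq, Set.mem_Icc] at hb'Tuv
    obtain ⟨t, htE, ht1, ht2⟩ := hb'Tuv
    set a := max t (α + Δ) with ha
    have haA : a ∈ A := Finset.mem_insert_of_mem
      (Finset.mem_image.2 ⟨(t, u, v), htE, rfl⟩)
    have hab' : a ≤ b' := max_le ht1 hb'TD.1
    have hacS : Set.Icc a c ⊆ S := by
      intro p hp
      rcases le_total p b' with h | h
      · refine ⟨⟨le_trans (le_max_right _ _) hp.1, le_trans hp.2 hcS.1.2⟩, ?_⟩
        simp only [Tuv, Set.mem_iUnion, Set.mem_setOf_eq, Set.mem_Icc]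
        exact ⟨t, htE, le_trans (le_max_left _ _) hp.1, le_trans h ht2⟩
      · exact hsub' ⟨h, le_trans hp.2 (by linarith)⟩
    have haA' : a ∈ A' := Finset.mem_filter.2 ⟨haA, hacS⟩
    have : b ≤ a := Finset.min'_le _ _ haA'
    linarith
  · by_contra hne
    have hlt : e < e' := lt_of_le_of_ne he' (Ne.symm hne)
    have he'S : e' ∈ S := hsub' ⟨hb'e', le_refl e'⟩
    obtain ⟨he'TD, he'Tuv⟩ := he'S
    simp only [Tuv, Set.mem_iUnion, Set.mem_setOf_eq, Set.mem_Icc] at he'Tuv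
    obtain ⟨t, htE, ht1, ht2⟩ := he'Tuv
    set β := min (t + Δ) ω with hβ
    have hβB : β ∈ B := Finset.mem_insert_of_mem
      (Finset.mem_image.2 ⟨(t, u, v), htE, rfl⟩)
    have he'β : e' ≤ β := le_min ht2 he'TD.2
    have hdβS : Set.Icc d β ⊆ S := by
      intro p hp
      rcases le_total e' p with h | h
      · refine ⟨⟨le_trans hdS.1.1 hp.1, le_trans hp.2 (min_le_right _ _)⟩, ?_⟩
        simp only [Tuv, Set.mem_iUnion, Set.mem_setOf_eq, Set.mem_Icc]
        exact ⟨t, htE, le_trans ht1 h, le_trans hp.2 (min_le_left _ _)⟩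
      · exact hsub' ⟨le_trans (by linarith : b' ≤ d) hp.1, h⟩
    have hβB' : β ∈ B' := Finset.mem_filter.2 ⟨hβB, hdβS⟩
    have : β ≤ e := Finset.le_max' _ _ hβB'
    linarith

/-- `(X,[x,y]) ↦ (X,[x+Δ,y])` is a bijection between the `Δ`-cliques of `L`
and the cliques of `L_Δ`, preserving maximality. -/
theorem deltaClique_bijection {V : Type*} [DecidableEq V]
    (E : Finset (ℝ × V × V)) (α ω Δ : ℝ) (hΔ0 : 0 ≤ Δ) (hΔ : Δ ≤ ω - α)
    (hE : ∀ t u v, (t, u, v) ∈ E → (α ≤ t ∧ t ≤ ω) ∧ u ≠ v)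
    (hU : ∀ t u v, (t, u, v) ∈ E → (t, v, u) ∈ E) :
    Set.BijOn (fun p : Finset V × ℝ × ℝ => (p.1, p.2.1 + Δ, p.2.2))
      {p | IsDeltaClique E α ω Δ p.1 p.2.1 p.2.2}
      {p | IsCliqueD E α ω Δ p.1 p.2.1 p.2.2} ∧
    ∀ X x y, IsMaxDeltaClique E α ω Δ X x y ↔ IsMaxCliqueD E α ω Δ X (x + Δ) y := by
  have fwd : ∀ (X : Finset V) (x y : ℝ), IsDeltaClique E α ω Δ X x y →
      IsCliqueD E α ω Δ X (x + Δ) y := by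
    rintro X x y ⟨hcard, hαx, hyω, hxy, hcl⟩
    refine ⟨hcard, hxy, ?_⟩
    intro u hu v hv huv
    have hsub : Set.Icc (x + Δ) y ⊆ TD α ω Δ ∩ Tuv E Δ u v := by
      rintro s ⟨hs1, hs2⟩
      constructor
      · exact ⟨by linarith, by linarith⟩
      · obtain ⟨t, ht1, ht2, ht3⟩ := hcl u hu v hv huv (s - Δ) (by linarith) (by linarith)
        simp only [Tuv, Set.mem_iUnion, Set.mem_setOf_eq, Set.mem_Icc]
        exact ⟨t, ht3, by linarith, by linarith⟩
    obtain ⟨b, e, hbe, hb, he⟩ := exists_max_interval E α ω Δ u v (by linarith) hsub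
    exact ⟨b, e, hbe, hb, he⟩
  have bwd : ∀ (X : Finset V) (x y : ℝ), IsCliqueD E α ω Δ X (x + Δ) y →
      IsDeltaClique E α ω Δ X x y := by
    rintro X x y ⟨hcard, hxy, hcl⟩
    obtain ⟨u, hu, v, hv, huv⟩ := Finset.one_lt_card.1 hcard
    obtain ⟨b, e, ⟨hbe, hbeS, _⟩, hb, he⟩ := hcl u hu v hv huv
    have hxTD := (hbeS ⟨hb, by linarith⟩).1
    have hyTD := (hbeS ⟨by linarith, he⟩).1
    refine ⟨hcard, by have := hxTD.1; linarith, hyTD.2, hxy, ?_⟩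
    intro u' hu' v' hv' huv' s hs1 hs2
    obtain ⟨b', e', ⟨_, hS, _⟩, hb', he'⟩ := hcl u' hu' v' hv' huv'
    have hmem : s + Δ ∈ Tuv E Δ u' v' := (hS ⟨by linarith, by linarith⟩).2
    simp only [Tuv, Set.mem_iUnion, Set.mem_setOf_eq, Set.mem_Icc] at hmem
    obtain ⟨t, htE, ht1, ht2⟩ := hmem
    exact ⟨t, by linarith, ht1, htE⟩
  constructor
  · refine ⟨?_, ?_, ?_⟩
    · rintro ⟨X, x, y⟩ h
      exact fwd X x y h
    · rintro ⟨X, x, y⟩ - ⟨X', x', y'⟩ - h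
      simp only [Prod.mk.injEq] at h
      obtain ⟨h1, h2, h3⟩ := h
      simp only [Prod.mk.injEq]
      exact ⟨h1, by linarith, h3⟩
    · rintro ⟨X, p, q⟩ h
      have hpq : p - Δ + Δ = p := by ring
      refine ⟨(X, p - Δ, q), ?_, ?_⟩
      · exact bwd X (p - Δ) q (by rw [hpq]; exact h)
      · simp only [Prod.mk.injEq]
        exact ⟨trivial, by linarith, trivial⟩
  · intro X x y
    constructor
    · rintro ⟨h1, h2⟩
      refine ⟨fwd X x y h1, ?_⟩
      intro X' x' y' h' hX hx hy
      have hx'' : x' - Δ + Δ = x' := by ring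
      obtain ⟨hXe, hxe, hye⟩ := h2 X' (x' - Δ) y'
        (bwd X' (x' - Δ) y' (by rw [hx'']; exact h')) hX (by linarith) hy
      exact ⟨hXe, by linarith, hye⟩
    · rintro ⟨h1, h2⟩
      refine ⟨bwd X x y h1, ?_⟩
      intro X' x' y' h' hX hx hy
      obtain ⟨hXe, hxe, hye⟩ := h2 X' (x' + Δ) y' (fwd X' x' y' h') hX (by linarith) hy
      exact ⟨hXe, by linarith, hye⟩
end

section
/- If (X, [x,y]) is a clique of a simple undirected link stream with durations L and there exists a link (b,e,u,v) ∈ E with u,v ∈ X and b = x and e = y, and no node outside X can be added while keeping a clique on [x,y], then the clique obtained by extending [x,y] maximally in time equals (X,[x,y]) itself; in particular, (X,[x,y]) is a maximal clique. -/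
variable {V : Type*} [DecidableEq V]

/-- a clique realized by a single link `(x,y,u,v)`, to which no node can be
added, cannot be extended in time and is maximal. -/
theorem clique_with_tight_link_is_max {V : Type*} [DecidableEq V]
    (E : Finset (ℝ × ℝ × V × V)) (hS : SimpleLS E) (hU : UndirectedLS E)
    (hD : DisjointLinks E) (X : Finset V) (x y : ℝ) (u v : V)
    (hC : IsClique E X x y) (hu : u ∈ X) (hv : v ∈ X) (hlink : (x, y, u, v) ∈ E)
    (hnoadd : ∀ w ∉ X, ¬ IsClique E (insert w X) x y) :
    (∀ x' y', IsClique E X x' y' → x' ≤ x → y ≤ y' → x' = x ∧ y' = y) ∧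
    IsMaxClique E X x y := by
  obtain ⟨huv, hxy⟩ := hS x y u v hlink
  have key : ∀ x' y', IsClique E X x' y' → x' ≤ x → y ≤ y' → x' = x ∧ y' = y := by
    intro x' y' hC' hx' hy'
    obtain ⟨b, e, hbe, hb, he⟩ := hC'.2.2 u hu v hv huv
    have heq : (b, e) = (x, y) := by
      by_contra h
      have hd := hD b e x y u v hbe hlink h
      exact Set.disjoint_left.mp hd
        (Set.mem_Icc.mpr ⟨le_trans hb hx', le_trans (le_trans hxy hy') he⟩)
        (Set.mem_Icc.mpr ⟨le_refl x, hxy⟩)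
    obtain ⟨hb', he'⟩ := Prod.mk.injEq .. ▸ heq
    subst hb'; subst he'
    exact ⟨le_antisymm hx' hb, le_antisymm he hy'⟩
  refine ⟨key, hC, ?_⟩
  intro X' x' y' hC' hsub hx' hy'
  have hXX : X' = X := by
    apply Finset.Subset.antisymm _ hsub
    intro w hw
    by_contra hwX
    apply hnoadd w hwX
    refine ⟨le_trans hC.1 (Finset.card_le_card (Finset.subset_insert w X)),
      hC.2.1, ?_⟩
    intro a ha b hb hab
    obtain ⟨p, q, hpq, hp, hq⟩ := hC'.2.2 a
      ((Finset.mem_insert.mp ha).elim (fun h => h ▸ hw) (fun h => hsub h)) b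
      ((Finset.mem_insert.mp hb).elim (fun h => h ▸ hw) (fun h => hsub h)) hab
    exact ⟨p, q, hpq, le_trans hp hx', le_trans hy' hq⟩
  subst hXX
  obtain ⟨h1, h2⟩ := key x' y' hC' hx' hy'
  exact ⟨rfl, h1, h2⟩
end

section
/- Let L be a finite simple undirected link stream with durations and let (X, [x,y]) be a clique. If for every pair of distinct u,v ∈ X the unique link (b_{uv}, e_{uv}, u, v) ∈ E with [x,y] ⊆ [b_{uv}, e_{uv}] satisfies b' := max b_{uv} and e' := min e_{uv}, then (X, [b', e']) is a clique of L containing (X, [x,y]), and it is maximal in time: there is no interval [x'',y''] strictly containing [b',e'] such that (X, [x'',y'']) is a clique. -/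
variable {V : Type*} [DecidableEq V]

/-- extending a clique's interval to `[max b_uv, min e_uv]` yields a clique
that cannot be further extended in time. -/
theorem clique_extend_to_tight_interval {V : Type*} [DecidableEq V]
    (E : Finset (ℝ × ℝ × V × V)) (hS : SimpleLS E) (hU : UndirectedLS E)
    (hD : DisjointLinks E) (X : Finset V) (x y b' e' : ℝ) (hC : IsClique E X x y)
    (hb : IsGreatest {b | ∃ e u v, u ∈ X ∧ v ∈ X ∧ u ≠ v ∧
      (b, e, u, v) ∈ E ∧ b ≤ x ∧ y ≤ e} b')
    (he : IsLeast {e | ∃ b u v, u ∈ X ∧ v ∈ X ∧ u ≠ v ∧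
      (b, e, u, v) ∈ E ∧ b ≤ x ∧ y ≤ e} e') :
    IsClique E X b' e' ∧ b' ≤ x ∧ y ≤ e' ∧
    ∀ x'' y'', x'' ≤ b' → e' ≤ y'' → (x'', y'') ≠ (b', e') → ¬ IsClique E X x'' y'' := by
  obtain ⟨⟨eb, ub, vb, hubX, hvbX, hubvb, hmemb, hbx, hybe⟩, hbub⟩ := hb
  obtain ⟨⟨be, ue, ve, hueX, hveX, hueve, hmeme, hbex, hyee⟩, heub⟩ := he
  have hb'x : b' ≤ x := hbx
  have hye' : y ≤ e' := hyee
  have hb'e' : b' ≤ e' := le_trans hb'x (le_trans hC.2.1 hye')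
  have hclique : IsClique E X b' e' := by
    refine ⟨hC.1, hb'e', ?_⟩
    intro u hu v hv huv
    obtain ⟨b, e, hm, hbx2, hye2⟩ := hC.2.2 u hu v hv huv
    have hbb' : b ≤ b' := hbub ⟨e, u, v, hu, hv, huv, hm, hbx2, hye2⟩
    have he'e : e' ≤ e := heub ⟨b, u, v, hu, hv, huv, hm, hbx2, hye2⟩
    exact ⟨b, e, hm, hbb', he'e⟩
  refine ⟨hclique, hb'x, hye', ?_⟩
  intro x'' y'' hx'' hy'' hne hC''
  rcases lt_or_eq_of_le hx'' with hlt | heq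
  · obtain ⟨b2, e2, hm2, hb2, he2⟩ := hC''.2.2 ub hubX vb hvbX hubvb
    by_cases hsame : (b2, e2) = (b', eb)
    · have : b2 = b' := (Prod.mk.injEq _ _ _ _).mp hsame |>.1
      exact absurd (this ▸ hb2) (not_le_of_gt hlt)
    · have hdisj := hD b2 e2 b' eb ub vb hm2 hmemb hsame
      have hx1 : x ∈ Set.Icc b2 e2 :=
        ⟨le_trans hb2 (le_trans (le_of_lt hlt) hb'x),
         le_trans (le_trans hC.2.1 hye') (le_trans hy'' he2)⟩
      have hx2 : x ∈ Set.Icc b' eb := ⟨hb'x, le_trans hC.2.1 hybe⟩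
      exact (Set.disjoint_left.mp hdisj hx1) hx2
  · -- x'' = b', so e' < y''
    have hy : e' < y'' := by
      rcases lt_or_eq_of_le hy'' with h | h
      · exact h
      · exact absurd (by rw [heq, h]) hne
    obtain ⟨b2, e2, hm2, hb2, he2⟩ := hC''.2.2 ue hueX ve hveX hueve
    by_cases hsame : (b2, e2) = (be, e')
    · have : e2 = e' := (Prod.mk.injEq _ _ _ _).mp hsame |>.2
      exact absurd (this ▸ he2) (not_le_of_gt hy)
    · have hdisj := hD b2 e2 be e' ue ve hm2 hmeme hsame
      have hx1 : x ∈ Set.Icc b2 e2 :=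
        ⟨le_trans hb2 (le_trans hx'' hb'x),
         le_trans (le_trans hC.2.1 hye') (le_trans (le_of_lt hy) he2)⟩
      have hx2 : x ∈ Set.Icc be e' := ⟨hbex, le_trans hC.2.1 hyee⟩
      exact (Set.disjoint_left.mp hdisj hx1) hx2
end

section
/- Every maximal clique (X, [x,y]) of a finite simple undirected link stream L with |X| = k ≥ 2 can be reached by a sequence of cliques C_1, ..., C_{k-1}, C, where C_1 = ({u,v}, [x,x]) for some link (x,e,u,v) ∈ E with u,v ∈ X, each C_{i+1} is obtained from C_i = (X_i, [x,x]) by adding a single node of X (so X_i ⊆ X_{i+1} ⊆ X, |X_{i+1}| = |X_i| + 1), each C_i is a clique, and C is obtained from C_{k-1} = (X, [x,x]) by extending the time interval to [x,y]. -/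
variable {V : Type*} [DecidableEq V]

/-- every maximal clique `(X,[x,y])` with `|X| = k` is reached by a chain of
cliques on `[x,x]`, starting from a pair linked by a link beginning at `x`, adding one node
of `X` at a time up to `(X,[x,x])`, then extending the interval to `[x,y]`. -/
theorem maxClique_reachable_by_chain {V : Type*} [DecidableEq V]
    (E : Finset (ℝ × ℝ × V × V)) (hS : SimpleLS E) (hU : UndirectedLS E)
    (hD : DisjointLinks E) (X : Finset V) (x y : ℝ) (k : ℕ)
    (hM : IsMaxClique E X x y) (hk : X.card = k) (h2 : 2 ≤ k) :
    ∃ u v e, u ∈ X ∧ v ∈ X ∧ (x, e, u, v) ∈ E ∧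
      ∃ f : ℕ → Finset V, f 1 = {u, v} ∧ f (k - 1) = X ∧
        (∀ i, 1 ≤ i → i ≤ k - 1 → f i ⊆ X ∧ (f i).card = i + 1 ∧ IsClique E (f i) x x) ∧
        (∀ i, 1 ≤ i → i < k - 1 → f i ⊆ f (i + 1)) ∧
        IsClique E X x y := by

  classical
  obtain ⟨⟨hcard2, hxy, hlink⟩, hmax⟩ := hM
  set B : Finset (ℝ × ℝ × V × V) :=
    E.filter (fun l => l.2.2.1 ∈ X ∧ l.2.2.2 ∈ X ∧ l.1 ≤ x ∧ y ≤ l.2.1) with hB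
  obtain ⟨a, ha, c, hc, hac⟩ := Finset.one_lt_card.mp hcard2
  obtain ⟨b0, e0, hmem0, hb0, he0⟩ := hlink a ha c hc hac
  have hBne : B.Nonempty := ⟨(b0, e0, a, c), by simp [hB, hmem0, ha, hc, hb0, he0]⟩
  set x' := B.sup' hBne (fun l => l.1) with hx'
  have hx'le : x' ≤ x := by
    apply Finset.sup'_le
    intro l hl
    exact ((Finset.mem_filter.mp hl).2.2.2).1
  have hclique' : IsClique E X x' y := by
    refine ⟨hcard2, le_trans hx'le hxy, ?_⟩
    intro p hp q hq hpq
    obtain ⟨b, e, hm, hb, he⟩ := hlink p hp q hq hpq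
    have hmB : (b, e, p, q) ∈ B := by simp [hB, hm, hp, hq, hb, he]
    exact ⟨b, e, hm, Finset.le_sup' (fun l => l.1) hmB, he⟩
  have hxeq : x' = x := (hmax X x' y hclique' (subset_refl X) hx'le (le_refl y)).2.1
  obtain ⟨l0, hlB, hsup⟩ := Finset.exists_mem_eq_sup' hBne (fun l => l.1)
  obtain ⟨b, e, u, v⟩ := l0
  simp only [hB, Finset.mem_filter] at hlB
  obtain ⟨hlE, hu, hv, hbx, hye⟩ := hlB
  have hbx' : b = x := by rw [← hx', hxeq] at hsup; exact hsup.symm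
  subst hbx'
  have huv : u ≠ v := (hS b e u v hlE).1
  refine ⟨u, v, e, hu, hv, hlE, ?_⟩
  have huvsub : ({u, v} : Finset V) ⊆ X := by
    intro w hw; simp at hw; rcases hw with rfl | rfl <;> assumption
  set L := (X \ {u, v}).toList with hL
  have hLnd : L.Nodup := Finset.nodup_toList _
  have hLfs : L.toFinset = X \ {u, v} := Finset.toList_toFinset _
  have hLlen : L.length = k - 2 := by
    rw [hL, Finset.length_toList, Finset.card_sdiff_of_subset huvsub, Finset.card_pair huv, hk]
  have hclq : ∀ S : Finset V, S ⊆ X → 2 ≤ S.card → IsClique E S b b := by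
    intro S hSX hS2
    refine ⟨hS2, le_refl b, ?_⟩
    intro p hp q hq hpq
    obtain ⟨b', e', hm, hb', he'⟩ := hlink p (hSX hp) q (hSX hq) hpq
    exact ⟨b', e', hm, hb', le_trans hxy he'⟩
  have hsubX : ∀ i : ℕ, ({u, v} : Finset V) ∪ (L.take i).toFinset ⊆ X := by
    intro i
    apply Finset.union_subset huvsub
    intro w hw
    rw [List.mem_toFinset] at hw
    have := List.take_subset i L hw
    rw [← List.mem_toFinset, hLfs, Finset.mem_sdiff] at this
    exact this.1
  have hcardf : ∀ i : ℕ, i ≤ k - 2 →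
      (({u, v} : Finset V) ∪ (L.take i).toFinset).card = i + 2 := by
    intro i hi
    have hdisj : Disjoint ({u, v} : Finset V) (L.take i).toFinset := by
      rw [Finset.disjoint_left]
      intro w hw hw'
      rw [List.mem_toFinset] at hw'
      have := List.take_subset i L hw'
      rw [← List.mem_toFinset, hLfs, Finset.mem_sdiff] at this
      exact this.2 hw
    rw [Finset.card_union_of_disjoint hdisj, Finset.card_pair huv,
      List.toFinset_card_of_nodup (hLnd.sublist (List.take_sublist i L)),
      List.length_take, hLlen, min_eq_left hi]
    omega
  refine ⟨fun i => ({u, v} : Finset V) ∪ (L.take (i - 1)).toFinset, by simp, ?_, ?_, ?_,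
    ⟨hcard2, hxy, hlink⟩⟩
  · show ({u, v} : Finset V) ∪ (L.take (k - 1 - 1)).toFinset = X
    have : k - 1 - 1 = k - 2 := by omega
    rw [this, ← hLlen, List.take_length, hLfs,
      Finset.union_sdiff_of_subset huvsub]
  · intro i hi1 hik
    refine ⟨hsubX _, ?_, ?_⟩
    · rw [hcardf (i - 1) (by omega)]; omega
    · exact hclq _ (hsubX _) (by rw [hcardf (i - 1) (by omega)]; omega)
  · intro i hi1 hik
    apply Finset.union_subset_union (subset_refl _)
    intro w hw
    rw [List.mem_toFinset] at hw ⊢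
    have : L.take (i - 1) = (L.take (i + 1 - 1)).take (i - 1) := by
      rw [List.take_take, min_eq_left (by omega)]
    rw [this] at hw
    exact List.take_subset _ _ hw
end
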